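/- There exists an absolute constant C > 0 with the following property. Let γ ∈ ℝ, let φ₁ : ℝ → ℝ be continuously differentiable with φ₁ and ∂_x φ₁ in L²(ℝ), and let φ₂ : ℝ → ℂ be continuously differentiable with φ₂ and ∂_x φ₂ in L²(ℝ). Then the function x ↦ e^{i γ φ₁(x)} φ₂(x) satisfies ‖e^{iγφ₁} φ₂‖_{H¹} ≤ C (1 + |γ|) (1 + ‖φ₁‖_{H¹}) ‖φ₂‖_{H¹}. -/

import Mathlib

open MeasureTheory Complex

open scoped RealInnerProductSpace ENNReal NNReal

/-- The `H¹` norm `‖f‖_{H¹} = (‖f‖_{L²}² + ‖∂ₓf‖_{L²}²)^{1/2}`. -/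
noncomputable def H1norm {E : Type*} [NormedAddCommGroup E] [NormedSpace ℝ E] (f : ℝ → E) : ℝ :=
  (((eLpNorm f 2 volume).toReal) ^ 2 + ((eLpNorm (deriv f) 2 volume).toReal) ^ 2) ^ ((1:ℝ)/2)

lemma H1norm_nonneg {E : Type*} [NormedAddCommGroup E] [NormedSpace ℝ E] (f : ℝ → E) :
    0 ≤ H1norm f := Real.rpow_nonneg (by positivity) _

lemma toReal_eLpNorm_two_sq {E : Type*} [NormedAddCommGroup E] {f : ℝ → E}
    (hf : MemLp f 2 volume) :
    ((eLpNorm f 2 volume).toReal) ^ 2 = ∫ x, ‖f x‖ ^ 2 := by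
  have h := hf.eLpNorm_eq_integral_rpow_norm two_ne_zero (by norm_num)
  have h2 : (2:ℝ≥0∞).toReal = 2 := by norm_num
  rw [h2] at h
  have hI : 0 ≤ ∫ x, ‖f x‖ ^ (2:ℝ) := integral_nonneg (fun x => by positivity)
  rw [h, ENNReal.toReal_ofReal (by positivity)]
  rw [← Real.rpow_natCast ((∫ x, ‖f x‖ ^ (2:ℝ)) ^ (2⁻¹:ℝ)) 2, ← Real.rpow_mul hI]
  norm_num

lemma eLpNorm_le_H1norm_fst {E : Type*} [NormedAddCommGroup E] [NormedSpace ℝ E] (f : ℝ → E) :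
    (eLpNorm f 2 volume).toReal ≤ H1norm f := by
  unfold H1norm
  rw [← Real.sqrt_eq_rpow]
  have := Real.sqrt_le_sqrt (show (eLpNorm f 2 volume).toReal ^ 2 ≤
      (eLpNorm f 2 volume).toReal ^ 2 + (eLpNorm (deriv f) 2 volume).toReal ^ 2 from
      le_add_of_nonneg_right (by positivity))
  rwa [Real.sqrt_sq ENNReal.toReal_nonneg] at this

lemma eLpNorm_deriv_le_H1norm {E : Type*} [NormedAddCommGroup E] [NormedSpace ℝ E] (f : ℝ → E) :
    (eLpNorm (deriv f) 2 volume).toReal ≤ H1norm f := by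
  unfold H1norm
  rw [← Real.sqrt_eq_rpow]
  have := Real.sqrt_le_sqrt (show (eLpNorm (deriv f) 2 volume).toReal ^ 2 ≤
      (eLpNorm f 2 volume).toReal ^ 2 + (eLpNorm (deriv f) 2 volume).toReal ^ 2 from
      le_add_of_nonneg_left (by positivity))
  rwa [Real.sqrt_sq ENNReal.toReal_nonneg] at this

/-- 1D Sobolev (Agmon) type bound: `‖f‖_∞ ≤ ‖f‖_{H¹}`. -/
lemma sup_le_H1norm {f : ℝ → ℂ} (hf : ContDiff ℝ 1 f)
    (h2 : MemLp f 2 volume) (h2' : MemLp (deriv f) 2 volume) (x : ℝ) :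
    ‖f x‖ ≤ H1norm f := by
  set F : ℝ → ℝ := fun y => ‖f y‖ ^ 2 with hFdef
  set F' : ℝ → ℝ := fun y => ⟪f y, deriv f y⟫ + ⟪deriv f y, f y⟫ with hF'def
  set G : ℝ → ℝ := fun y => ‖f y‖ ^ 2 + ‖deriv f y‖ ^ 2 with hGdef
  have hdiff : Differentiable ℝ f := hf.differentiable one_ne_zero
  have hderiv_cont : Continuous (deriv f) := hf.continuous_deriv le_rfl
  have hd : ∀ y, HasDerivAt F (F' y) y := by
    intro y
    have h1 : HasDerivAt f (deriv f y) y := (hdiff y).hasDerivAt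
    have h2 := h1.inner ℝ h1
    simp only [hFdef, hF'def]
    have h3 : (fun t => (⟪f t, f t⟫ : ℝ)) = fun t => ‖f t‖ ^ 2 :=
      funext fun t => real_inner_self_eq_norm_sq _
    rw [h3] at h2
    exact h2
  have hF'le : ∀ y, |F' y| ≤ G y := by
    intro y
    have hb1 : |(⟪f y, deriv f y⟫ : ℝ)| ≤ ‖f y‖ * ‖deriv f y‖ := abs_real_inner_le_norm _ _
    have hb2 : |(⟪deriv f y, f y⟫ : ℝ)| ≤ ‖deriv f y‖ * ‖f y‖ := abs_real_inner_le_norm _ _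
    have := abs_add_le (⟪f y, deriv f y⟫ : ℝ) (⟪deriv f y, f y⟫ : ℝ)
    have hn1 : (0:ℝ) ≤ ‖f y‖ := norm_nonneg _
    have hn2 : (0:ℝ) ≤ ‖deriv f y‖ := norm_nonneg _
    simp only [hF'def, hGdef]
    nlinarith [sq_nonneg (‖f y‖ - ‖deriv f y‖)]
  have hF'cont : Continuous F' :=
    ((continuous_inner.comp (hf.continuous.prodMk hderiv_cont)).add
      (continuous_inner.comp (hderiv_cont.prodMk hf.continuous)))
  have hFint : Integrable F volume :=
    (memLp_two_iff_integrable_sq_norm h2.aestronglyMeasurable).mp h2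
  have hF'int : Integrable (fun y => ‖deriv f y‖ ^ 2) volume :=
    (memLp_two_iff_integrable_sq_norm h2'.aestronglyMeasurable).mp h2'
  have hGint : Integrable G volume := hFint.add hF'int
  -- key: F x ≤ ε + ∫ G, for all ε > 0
  have key : ∀ ε > 0, F x ≤ ε + ∫ y, G y := by
    intro ε hε
    -- find y ≤ x with F y < ε
    have hy : ∃ y ≤ x, F y < ε := by
      by_contra h
      push_neg at h
      have hsub : Set.Iic x ⊆ {y | ε ≤ F y} := fun y hy => h y hy
      have := (measure_mono hsub).trans_lt (hFint.measure_ge_lt_top hε)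
      rw [Real.volume_Iic] at this
      exact absurd this (by simp)
    obtain ⟨y, hyx, hFy⟩ := hy
    have hftc : ∫ t in y..x, F' t = F x - F y :=
      intervalIntegral.integral_eq_sub_of_hasDerivAt (fun t _ => hd t)
        (hF'cont.intervalIntegrable y x)
    have hmono : ∫ t in y..x, F' t ≤ ∫ t in y..x, G t := by
      apply intervalIntegral.integral_mono_on hyx (hF'cont.intervalIntegrable y x)
        hGint.intervalIntegrable
      intro t _
      exact (le_abs_self _).trans (hF'le t)
    have hGset : ∫ t in y..x, G t ≤ ∫ t, G t := by
      rw [intervalIntegral.integral_of_le hyx]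
      exact setIntegral_le_integral hGint
        (Filter.Eventually.of_forall fun t => by simp only [hGdef]; positivity)
    have : F x - F y ≤ ∫ t, G t := by rw [← hftc]; exact hmono.trans hGset
    linarith
  have hFx : F x ≤ ∫ y, G y := by
    refine le_of_forall_pos_le_add fun ε hε => ?_
    have := key ε hε
    linarith
  have hGeq : ∫ y, G y = ((eLpNorm f 2 volume).toReal) ^ 2
      + ((eLpNorm (deriv f) 2 volume).toReal) ^ 2 := by
    rw [toReal_eLpNorm_two_sq h2, toReal_eLpNorm_two_sq h2']
    exact integral_add hFint hF'int
  have hFx2 : ‖f x‖ ^ 2 ≤ ((eLpNorm f 2 volume).toReal) ^ 2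
      + ((eLpNorm (deriv f) 2 volume).toReal) ^ 2 := by
    rw [← hGeq]; exact hFx
  have hsq := Real.sqrt_le_sqrt hFx2
  rw [Real.sqrt_sq (norm_nonneg _)] at hsq
  unfold H1norm
  rw [← Real.sqrt_eq_rpow]
  exact hsq

/-- `‖e^{iγφ₁} φ₂‖_{H¹} ≤ C (1+|γ|)(1+‖φ₁‖_{H¹}) ‖φ₂‖_{H¹}`. -/
theorem exp_mul_H1_bound :
    ∃ C > 0, ∀ (γ : ℝ) (φ₁ : ℝ → ℝ) (φ₂ : ℝ → ℂ),
      ContDiff ℝ 1 φ₁ → MemLp φ₁ 2 volume → MemLp (deriv φ₁) 2 volume →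
      ContDiff ℝ 1 φ₂ → MemLp φ₂ 2 volume → MemLp (deriv φ₂) 2 volume →
      H1norm (fun x => Complex.exp (Complex.I * (↑γ:ℂ) * (↑(φ₁ x):ℂ)) * φ₂ x)
        ≤ C * (1 + |γ|) * (1 + H1norm φ₁) * H1norm φ₂ := by
  refine ⟨2, by norm_num, fun γ φ₁ φ₂ hφ₁ hφ₁2 hφ₁2' hφ₂ hφ₂2 hφ₂2' => ?_⟩
  set g : ℝ → ℂ := fun x => Complex.exp (Complex.I * (↑γ:ℂ) * (↑(φ₁ x):ℂ)) * φ₂ x with hgdef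
  set M := H1norm φ₂ with hMdef
  have hM0 : 0 ≤ M := H1norm_nonneg φ₂
  have hM1 : 0 ≤ H1norm φ₁ := H1norm_nonneg φ₁
  have hsup : ∀ x, ‖φ₂ x‖ ≤ M := sup_le_H1norm hφ₂ hφ₂2 hφ₂2'
  have hexp_norm : ∀ r : ℝ, ‖Complex.exp (Complex.I * (↑γ:ℂ) * (↑r:ℂ))‖ = 1 := by
    intro r
    rw [Complex.norm_exp]
    have : (Complex.I * (↑γ:ℂ) * (↑r:ℂ)).re = 0 := by simp
    rw [this, Real.exp_zero]
  -- norm equality for g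
  have hnorm_g : ∀ x, ‖g x‖ = ‖φ₂ x‖ := by
    intro x
    simp only [hgdef, norm_mul, hexp_norm, one_mul]
  have hA : eLpNorm g 2 volume = eLpNorm φ₂ 2 volume :=
    eLpNorm_congr_norm_ae (Filter.Eventually.of_forall hnorm_g)
  -- derivative of g
  have hdiff₁ : Differentiable ℝ φ₁ := hφ₁.differentiable one_ne_zero
  have hdiff₂ : Differentiable ℝ φ₂ := hφ₂.differentiable one_ne_zero
  have hder : ∀ x, HasDerivAt g
      (Complex.exp (Complex.I * (↑γ:ℂ) * (↑(φ₁ x):ℂ)) * (Complex.I * (↑γ:ℂ) * (↑(deriv φ₁ x):ℂ)) * φ₂ x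
        + Complex.exp (Complex.I * (↑γ:ℂ) * (↑(φ₁ x):ℂ)) * deriv φ₂ x) x := by
    intro x
    have h1 : HasDerivAt (fun y => ((φ₁ y : ℂ))) (Complex.ofReal (deriv φ₁ x)) x :=
      HasDerivAt.ofReal_comp ((hdiff₁ x).hasDerivAt)
    have h2 : HasDerivAt (fun y => Complex.I * (↑γ:ℂ) * ((φ₁ y : ℂ)))
        (Complex.I * (↑γ:ℂ) * Complex.ofReal (deriv φ₁ x)) x := h1.const_mul _
    have h3 := h2.cexp
    have h4 : HasDerivAt φ₂ (deriv φ₂ x) x := (hdiff₂ x).hasDerivAt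
    exact h3.mul h4
  have hderiv_g : deriv g = fun x =>
      Complex.exp (Complex.I * (↑γ:ℂ) * (↑(φ₁ x):ℂ)) * (Complex.I * (↑γ:ℂ) * (↑(deriv φ₁ x):ℂ)) * φ₂ x
        + Complex.exp (Complex.I * (↑γ:ℂ) * (↑(φ₁ x):ℂ)) * deriv φ₂ x :=
    funext fun x => (hder x).deriv
  -- pointwise bound on deriv g
  set h : ℝ → ℝ := fun x => (|γ| * M) * ‖deriv φ₁ x‖ + ‖deriv φ₂ x‖ with hhdef
  have hptwise : ∀ x, ‖deriv g x‖ ≤ ‖h x‖ := by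
    intro x
    have h0 : (0:ℝ) ≤ h x := by
      simp only [hhdef]; positivity
    rw [Real.norm_of_nonneg h0, hderiv_g]
    simp only [hhdef]
    refine (norm_add_le _ _).trans ?_
    have e1 : ‖Complex.exp (Complex.I * (↑γ:ℂ) * (↑(φ₁ x):ℂ)) * (Complex.I * (↑γ:ℂ) * (↑(deriv φ₁ x):ℂ)) * φ₂ x‖
        ≤ (|γ| * M) * ‖deriv φ₁ x‖ := by
      rw [norm_mul, norm_mul, hexp_norm, one_mul, norm_mul, norm_mul]
      simp only [Complex.norm_I, Complex.norm_real, Real.norm_eq_abs, one_mul]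
      calc |γ| * |deriv φ₁ x| * ‖φ₂ x‖
          ≤ |γ| * |deriv φ₁ x| * M := by
            refine mul_le_mul_of_nonneg_left ?_ (by positivity)
            exact (hsup x)
        _ = |γ| * M * ‖deriv φ₁ x‖ := by rw [Real.norm_eq_abs]; ring
    have e2 : ‖Complex.exp (Complex.I * (↑γ:ℂ) * (↑(φ₁ x):ℂ)) * deriv φ₂ x‖ = ‖deriv φ₂ x‖ := by
      rw [norm_mul, hexp_norm, one_mul]
    rw [e2]
    linarith
  have hB1 : eLpNorm (deriv g) 2 volume ≤ eLpNorm h 2 volume := eLpNorm_mono hptwise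
  -- bound eLpNorm h
  have hmeas1 : AEStronglyMeasurable (fun x => (|γ| * M) * ‖deriv φ₁ x‖) volume :=
    (hφ₁2'.aestronglyMeasurable.norm.const_mul _)
  have hmeas2 : AEStronglyMeasurable (fun x => ‖deriv φ₂ x‖) volume :=
    hφ₂2'.aestronglyMeasurable.norm
  have hB2 : eLpNorm h 2 volume ≤
      ENNReal.ofReal (|γ| * M) * eLpNorm (deriv φ₁) 2 volume + eLpNorm (deriv φ₂) 2 volume := by
    refine (eLpNorm_add_le hmeas1 hmeas2 (by norm_num)).trans ?_
    gcongr
    · have : (fun x => (|γ| * M) * ‖deriv φ₁ x‖) = (|γ| * M) • (fun x => ‖deriv φ₁ x‖) := by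
        funext x; simp [smul_eq_mul]
      rw [this, eLpNorm_const_smul]
      have hnn : eLpNorm (fun x => ‖deriv φ₁ x‖) 2 volume = eLpNorm (deriv φ₁) 2 volume :=
        eLpNorm_norm _
      rw [hnn]
      gcongr
      rw [← ofReal_norm, Real.norm_of_nonneg (by positivity)]
    · rw [eLpNorm_norm]
  have hφ₁'fin : eLpNorm (deriv φ₁) 2 volume ≠ ⊤ := hφ₁2'.2.ne
  have hφ₂'fin : eLpNorm (deriv φ₂) 2 volume ≠ ⊤ := hφ₂2'.2.ne
  have hRHSfin : ENNReal.ofReal (|γ| * M) * eLpNorm (deriv φ₁) 2 volume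
      + eLpNorm (deriv φ₂) 2 volume ≠ ⊤ :=
    ENNReal.add_ne_top.mpr ⟨ENNReal.mul_ne_top ENNReal.ofReal_ne_top hφ₁'fin, hφ₂'fin⟩
  have hBto : (eLpNorm (deriv g) 2 volume).toReal ≤
      |γ| * M * (eLpNorm (deriv φ₁) 2 volume).toReal + (eLpNorm (deriv φ₂) 2 volume).toReal := by
    have := ENNReal.toReal_mono hRHSfin (hB1.trans hB2)
    rwa [ENNReal.toReal_add (ENNReal.mul_ne_top ENNReal.ofReal_ne_top hφ₁'fin) hφ₂'fin,
      ENNReal.toReal_mul, ENNReal.toReal_ofReal (by positivity)] at this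
  -- final numeric estimates
  set A := (eLpNorm g 2 volume).toReal with hAdef
  set B := (eLpNorm (deriv g) 2 volume).toReal with hBdef
  have hAle : A ≤ M := by
    rw [hAdef, hA]
    exact eLpNorm_le_H1norm_fst φ₂
  have hBle : B ≤ |γ| * M * H1norm φ₁ + M := by
    refine hBto.trans ?_
    have l1 : (eLpNorm (deriv φ₁) 2 volume).toReal ≤ H1norm φ₁ := eLpNorm_deriv_le_H1norm φ₁
    have l2 : (eLpNorm (deriv φ₂) 2 volume).toReal ≤ M := eLpNorm_deriv_le_H1norm φ₂
    have : |γ| * M * (eLpNorm (deriv φ₁) 2 volume).toReal ≤ |γ| * M * H1norm φ₁ := by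
      refine mul_le_mul_of_nonneg_left l1 (by positivity)
    linarith
  have hH1g : H1norm g ≤ A + B := by
    rw [H1norm, ← Real.sqrt_eq_rpow]
    have hA0 : 0 ≤ A := ENNReal.toReal_nonneg
    have hB0 : 0 ≤ B := ENNReal.toReal_nonneg
    have : A ^ 2 + B ^ 2 ≤ (A + B) ^ 2 := by nlinarith
    calc Real.sqrt (A ^ 2 + B ^ 2) ≤ Real.sqrt ((A + B) ^ 2) := Real.sqrt_le_sqrt this
      _ = A + B := Real.sqrt_sq (by positivity)
  have hγ0 : 0 ≤ |γ| := abs_nonneg γ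
  calc H1norm g ≤ A + B := hH1g
    _ ≤ M + (|γ| * M * H1norm φ₁ + M) := by linarith
    _ ≤ 2 * (1 + |γ|) * (1 + H1norm φ₁) * M := by
        nlinarith [mul_nonneg hM0 hM1, mul_nonneg (mul_nonneg hγ0 hM0) hM1, mul_nonneg hγ0 hM0]
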